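/- Let G and H be two nonempty subsets of a reflexive Banach space E such that G is weakly closed and H is compact, and let T be an almost cyclic contraction on G ∪ H that is weakly sequentially continuous on G (i.e. if u_n → u weakly with u_n, u ∈ G, then Tu_n → Tu weakly). Then there exists u ∈ G such that ‖u − Tu‖ = σ(Tu,G). -/

import Mathlib

open Metric Filter Set

/-- Distance between two sets: `σ(G,H) = inf {σ(u,v) : u ∈ G, v ∈ H}`. -/
noncomputable def setDist {E : Type*} [MetricSpace E] (G H : Set E) : ℝ :=
  sInf (Set.image2 dist G H)

/-- The pair `(G,H)` has property UC. -/
def PropUC {E : Type*} [MetricSpace E] (G H : Set E) : Prop :=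
  ∀ u z v : ℕ → E, (∀ n, u n ∈ G) → (∀ n, z n ∈ G) → (∀ n, v n ∈ H) →
    Tendsto (fun n => dist (u n) (v n)) atTop (nhds (setDist G H)) →
    Tendsto (fun n => dist (z n) (v n)) atTop (nhds (setDist G H)) →
    Tendsto (fun n => dist (u n) (z n)) atTop (nhds 0)

/-- The pair `(G,H)` has property strongly UC. -/
def PropSUC {E : Type*} [MetricSpace E] (G H : Set E) : Prop :=
  ∀ u z v : ℕ → E, (∀ n, u n ∈ G) → (∀ n, z n ∈ G) → (∀ n, v n ∈ H) →
    Tendsto (fun n => dist (u n) (v n) - Metric.infDist (v n) G) atTop (nhds 0) →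
    Tendsto (fun n => dist (z n) (v n) - Metric.infDist (v n) G) atTop (nhds 0) →
    Tendsto (fun n => dist (u n) (z n)) atTop (nhds 0)

/-- `T` is an almost cyclic contraction on `G ∪ H`: it is cyclic and there is
`β ∈ [0,1)` with `σ(Tu,Tv) ≤ β·σ(u,v) + (1−β)·σ(v,G)` for all `u ∈ G`, `v ∈ H`. -/
def AlmostCyclicContraction {E : Type*} [MetricSpace E] (G H : Set E) (T : E → E) : Prop :=
  Set.MapsTo T G H ∧ Set.MapsTo T H G ∧
    ∃ β : ℝ, 0 ≤ β ∧ β < 1 ∧ ∀ u ∈ G, ∀ v ∈ H,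
      dist (T u) (T v) ≤ β * dist u v + (1 - β) * Metric.infDist v G


open NormedSpace TopologicalSpace


/-- A continuous functional vanishing on a closed subspace and nonzero at a point outside. -/
lemma aux_exists_vanishing_functional {E : Type*} [NormedAddCommGroup E] [NormedSpace ℝ E]
    (Y : Submodule ℝ E) (hYc : IsClosed (Y : Set E)) {x : E} (hx : x ∉ Y) :
    ∃ f : E →L[ℝ] ℝ, (∀ y ∈ Y, f y = 0) ∧ f x ≠ 0 := by
  obtain ⟨f, u, hus, hux⟩ := geometric_hahn_banach_closed_point (Y.convex) hYc hx
  have hzero : ∀ y ∈ Y, f y = 0 := by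
    intro y hy
    by_contra hne
    have h1 : ((u + 1) / f y) • y ∈ Y := Y.smul_mem _ hy
    have := hus _ h1
    rw [map_smul] at this
    simp only [smul_eq_mul] at this
    rw [div_mul_cancel₀ _ hne] at this
    linarith
  have h0 : (0:E) ∈ Y := Y.zero_mem
  have : f 0 < u := hus 0 h0
  rw [map_zero] at this
  exact ⟨f, hzero, by linarith⟩

/-- If the dual of a real normed space is separable then so is the space. -/
lemma aux_separable_of_dual_separable {X : Type*} [NormedAddCommGroup X] [NormedSpace ℝ X]
    [SeparableSpace (StrongDual ℝ X)] : SeparableSpace X := by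
  -- a choice of near-norming vectors
  have hsel : ∀ g : StrongDual ℝ X, ∃ x : X, ‖x‖ ≤ 1 ∧ ‖g‖ / 2 ≤ g x := by
    intro g
    rcases eq_or_ne g 0 with rfl | hg
    · exact ⟨0, by simp⟩
    · by_contra hcon
      push_neg at hcon
      have hb : ∀ x : X, ‖g x‖ ≤ (‖g‖ / 2) * ‖x‖ := by
        intro x
        rcases eq_or_ne x 0 with rfl | hx
        · simp
        · have hnx : (0:ℝ) < ‖x‖ := norm_pos_iff.2 hx
          have h1 : g (‖x‖⁻¹ • x) < ‖g‖ / 2 := hcon _ (by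
            rw [norm_smul, norm_inv, norm_norm, inv_mul_cancel₀ hnx.ne'])
          have h2 : g (‖x‖⁻¹ • (-x)) < ‖g‖ / 2 := hcon _ (by
            rw [norm_smul, norm_inv, norm_norm, norm_neg, inv_mul_cancel₀ hnx.ne'])
          rw [map_smul, smul_eq_mul] at h1
          rw [map_smul, map_neg, smul_eq_mul] at h2
          have e1 : ‖x‖ * (‖x‖⁻¹ * g x) = g x := by rw [← mul_assoc, mul_inv_cancel₀ hnx.ne', one_mul]
          have e2 : ‖x‖ * (‖x‖⁻¹ * -g x) = -g x := by rw [← mul_assoc, mul_inv_cancel₀ hnx.ne', one_mul]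
          have h1' := mul_lt_mul_of_pos_left h1 hnx
          have h2' := mul_lt_mul_of_pos_left h2 hnx
          rw [e1] at h1'
          rw [e2] at h2'
          have habs : |g x| ≤ (‖g‖ / 2) * ‖x‖ := by
            rw [abs_le]
            constructor
            · nlinarith
            · nlinarith
          simpa [Real.norm_eq_abs] using habs
      have := ContinuousLinearMap.opNorm_le_bound g (by positivity) hb
      have hgpos : (0:ℝ) < ‖g‖ := norm_pos_iff.2 hg
      linarith
  choose sel hsel1 hsel2 using hsel
  obtain ⟨s, hs_count, hs_dense⟩ := exists_countable_dense (StrongDual ℝ X)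
  set Y : Submodule ℝ X := (Submodule.span ℝ (sel '' s)).topologicalClosure with hY
  have hYtop : Y = ⊤ := by
    by_contra hne
    obtain ⟨x, hx⟩ : ∃ x : X, x ∉ Y := by
      by_contra h
      push_neg at h
      exact hne (Submodule.eq_top_iff'.2 h)
    obtain ⟨f, hf0, hfx⟩ := aux_exists_vanishing_functional Y
      (Submodule.isClosed_topologicalClosure _) hx
    have hfpos : (0:ℝ) < ‖f‖ := norm_pos_iff.2 (by
      intro h; rw [h] at hfx; exact hfx rfl)
    obtain ⟨g, hgb, hgs⟩ := (Metric.dense_iff.mp hs_dense f (‖f‖/4) (by positivity))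
    have hgf : dist f g < ‖f‖/4 := by
      rw [dist_comm]; exact Metric.mem_ball.1 hgb
    have hsub : sel '' s ⊆ (Y : Set X) := by
      intro z hz
      exact Submodule.le_topologicalClosure _ (Submodule.subset_span hz)
    have hselY : sel g ∈ Y := hsub ⟨g, hgs, rfl⟩
    have hfsel : f (sel g) = 0 := hf0 _ hselY
    have hdist : ‖g - f‖ < ‖f‖ / 4 := by
      rw [← dist_eq_norm]; rw [dist_comm]; exact hgf
    have hgnorm : ‖f‖ - ‖f‖/4 ≤ ‖g‖ := by
      have := norm_sub_norm_le g f
      have h2 : ‖f‖ - ‖g‖ ≤ ‖g - f‖ := by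
        have := norm_sub_norm_le f g
        rwa [norm_sub_rev] at this
      linarith
    have hval : g (sel g) = (g - f) (sel g) := by
      simp [hfsel]
    have hup : g (sel g) ≤ ‖f‖/4 := by
      rw [hval]
      calc (g - f) (sel g) ≤ ‖(g - f) (sel g)‖ := le_abs_self _
        _ ≤ ‖g - f‖ * ‖sel g‖ := (g - f).le_opNorm _
        _ ≤ ‖g - f‖ * 1 := by
            apply mul_le_mul_of_nonneg_left (hsel1 g) (norm_nonneg _)
        _ ≤ ‖f‖/4 := by rw [mul_one]; exact hdist.le
    have hlow : ‖g‖ / 2 ≤ g (sel g) := hsel2 g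
    linarith
  -- separability
  have hsep : IsSeparable (Y : Set X) := by
    have hc : (sel '' s).Countable := hs_count.image _
    exact (hc.isSeparable.span).closure
  rw [hYtop] at hsep
  have : IsSeparable (univ : Set X) := by simpa using hsep
  exact (isSeparable_univ_iff).1 this

/-- restriction of functionals to a subspace, as a continuous linear map -/
noncomputable def auxRestrict {E : Type*} [NormedAddCommGroup E] [NormedSpace ℝ E]
    (Y : Submodule ℝ E) : StrongDual ℝ E →L[ℝ] StrongDual ℝ Y :=
  LinearMap.mkContinuous
    { toFun := fun (f : StrongDual ℝ E) => f.comp Y.subtypeL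
      map_add' := fun f g => by ext y; simp
      map_smul' := fun c f => by ext y; simp }
    1
    (by
      intro f
      simp only [LinearMap.coe_mk, AddHom.coe_mk, one_mul]
      apply ContinuousLinearMap.opNorm_le_bound _ (norm_nonneg f)
      intro y
      calc ‖(f.comp Y.subtypeL) y‖ = ‖f y‖ := rfl
        _ ≤ ‖f‖ * ‖(y:E)‖ := f.le_opNorm _
        _ = ‖f‖ * ‖y‖ := rfl)

@[simp] lemma auxRestrict_apply {E : Type*} [NormedAddCommGroup E] [NormedSpace ℝ E]
    (Y : Submodule ℝ E) (f : StrongDual ℝ E) (y : Y) : auxRestrict Y f y = f y := rfl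

/-- A closed subspace of a reflexive space is reflexive. -/
lemma aux_subspace_reflexive {E : Type*} [NormedAddCommGroup E] [NormedSpace ℝ E]
    (href : Function.Surjective (inclusionInDoubleDual ℝ E))
    (Y : Submodule ℝ E) (hYc : IsClosed (Y : Set E)) :
    Function.Surjective (inclusionInDoubleDual ℝ Y) := by
  intro Λ
  set Λ' : StrongDual ℝ (StrongDual ℝ E) := Λ.comp (auxRestrict Y) with hΛ'
  obtain ⟨x, hxeq⟩ := href Λ'
  have hxval : ∀ f : StrongDual ℝ E, f x = Λ (auxRestrict Y f) := by
    intro f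
    have := congrArg (fun Φ => Φ f) hxeq
    simpa [dual_def, hΛ'] using this
  have hxY : x ∈ Y := by
    by_contra hx
    obtain ⟨f, hf0, hfx⟩ := aux_exists_vanishing_functional Y hYc hx
    have h0 : auxRestrict Y f = 0 := by
      ext y; exact hf0 y y.2
    have hfx0 : f x = 0 := by rw [hxval f, h0, map_zero]
    exact hfx hfx0
  refine ⟨⟨x, hxY⟩, ?_⟩
  ext φ
  obtain ⟨g, hg, -⟩ := exists_extension_norm_eq Y φ
  have hres : auxRestrict Y g = φ := by
    ext y; exact hg y
  calc inclusionInDoubleDual ℝ Y ⟨x, hxY⟩ φ = φ ⟨x, hxY⟩ := rfl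
    _ = g x := (hg ⟨x, hxY⟩).symm
    _ = Λ (auxRestrict Y g) := hxval g
    _ = Λ φ := by rw [hres]

/-- In a reflexive space, a bounded sequence has a weakly convergent subsequence. -/
lemma aux_weak_seq_compact {E : Type*} [NormedAddCommGroup E] [NormedSpace ℝ E]
    (href : Function.Surjective (inclusionInDoubleDual ℝ E))
    (u : ℕ → E) (C : ℝ) (hC : ∀ n, ‖u n‖ ≤ C) :
    ∃ (u₀ : E) (ψ : ℕ → ℕ), StrictMono ψ ∧
      ∀ f : StrongDual ℝ E, Tendsto (fun k => f (u (ψ k))) atTop (nhds (f u₀)) := by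
  have hC0 : 0 ≤ C := le_trans (norm_nonneg _) (hC 0)
  set Y : Submodule ℝ E := (Submodule.span ℝ (Set.range u)).topologicalClosure with hYdef
  have hYc : IsClosed (Y : Set E) := Submodule.isClosed_topologicalClosure _
  have huY : ∀ n, u n ∈ Y :=
    fun n => Submodule.le_topologicalClosure _ (Submodule.subset_span ⟨n, rfl⟩)
  -- separability of Y
  have hsepY : IsSeparable (Y : Set E) := by
    have := ((countable_range u).isSeparable.span (R := ℝ)).closure
    rwa [hYdef, Submodule.topologicalClosure_coe]
  haveI : SeparableSpace Y := hsepY.separableSpace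
  -- reflexivity of Y and separability of the double dual, hence of the dual
  have hYrefl := aux_subspace_reflexive href Y hYc
  haveI : SeparableSpace (StrongDual ℝ (StrongDual ℝ Y)) :=
    hYrefl.denseRange.separableSpace (inclusionInDoubleDual ℝ Y).continuous
  haveI : SeparableSpace (StrongDual ℝ Y) := aux_separable_of_dual_separable (X := StrongDual ℝ Y)
  obtain ⟨φs, hφs⟩ := exists_dense_seq (StrongDual ℝ Y)
  -- the sequence inside Y
  set u' : ℕ → Y := fun n => ⟨u n, huY n⟩ with hu'
  have hu'nrm : ∀ n, ‖u' n‖ ≤ C := fun n => hC n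
  -- diagonal extraction
  set K : ℕ → ℝ := fun m => ‖φs m‖ * C with hK
  set s : Set (ℕ → ℝ) := Set.univ.pi (fun m => Icc (-(K m)) (K m)) with hs
  have hsc : IsCompact s := isCompact_univ_pi (fun m => isCompact_Icc)
  set F : ℕ → (ℕ → ℝ) := fun n m => φs m (u' n) with hF
  have hFs : ∀ n, F n ∈ s := by
    intro n m _
    have h1 : ‖φs m (u' n)‖ ≤ ‖φs m‖ * C :=
      le_trans ((φs m).le_opNorm _) (by
        exact mul_le_mul_of_nonneg_left (hu'nrm n) (norm_nonneg _))
    rw [Real.norm_eq_abs, abs_le] at h1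
    exact ⟨h1.1, h1.2⟩
  obtain ⟨c, -, ψ, hψ, hFc⟩ := hsc.tendsto_subseq hFs
  have hφconv : ∀ m, Tendsto (fun k => φs m (u' (ψ k))) atTop (nhds (c m)) := by
    intro m
    have := tendsto_pi_nhds.1 hFc m
    exact this
  -- every functional converges along the subsequence
  have hcauchy : ∀ φ : StrongDual ℝ Y, CauchySeq (fun k => φ (u' (ψ k))) := by
    intro φ
    rw [Metric.cauchySeq_iff]
    intro ε hε
    have hD : (0:ℝ) < C + 1 := by linarith
    obtain ⟨m, hm⟩ := hφs.exists_dist_lt φ (show (0:ℝ) < ε / (4 * (C + 1)) by positivity)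
    have hnear : ∀ j, |φ (u' j) - φs m (u' j)| ≤ ε / 4 := by
      intro j
      have h1 : ‖(φ - φs m) (u' j)‖ ≤ ‖φ - φs m‖ * C :=
        le_trans ((φ - φs m).le_opNorm _) (by
          exact mul_le_mul_of_nonneg_left (hu'nrm j) (norm_nonneg _))
      have h2 : ‖φ - φs m‖ < ε / (4 * (C + 1)) := by
        exact lt_of_eq_of_lt (dist_eq_norm φ (φs m)).symm hm
      have h3 : ‖φ - φs m‖ * C ≤ ε / (4 * (C + 1)) * (C + 1) := by
        apply mul_le_mul h2.le (by linarith) hC0 (by positivity)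
      have h4 : ε / (4 * (C + 1)) * (C + 1) = ε / 4 := by field_simp
      have h5 : |φ (u' j) - φs m (u' j)| = ‖(φ - φs m) (u' j)‖ := by
        simp [Real.norm_eq_abs]
      rw [h5]; rw [h4] at h3; linarith
    obtain ⟨N, hN⟩ := Metric.cauchySeq_iff.1 (hφconv m).cauchySeq (ε/4) (by positivity)
    refine ⟨N, fun j hj k hk => ?_⟩
    have hmid := hN j hj k hk
    rw [Real.dist_eq] at hmid ⊢
    have t1 := hnear (ψ j)
    have t2 := hnear (ψ k)
    have : |φ (u' (ψ j)) - φ (u' (ψ k))| ≤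
        |φ (u' (ψ j)) - φs m (u' (ψ j))| + |φs m (u' (ψ j)) - φs m (u' (ψ k))|
          + |φs m (u' (ψ k)) - φ (u' (ψ k))| := by
      have := abs_sub_le (φ (u' (ψ j))) (φs m (u' (ψ j))) (φ (u' (ψ k)))
      have := abs_sub_le (φs m (u' (ψ j))) (φs m (u' (ψ k))) (φ (u' (ψ k)))
      calc |φ (u' (ψ j)) - φ (u' (ψ k))|
          ≤ |φ (u' (ψ j)) - φs m (u' (ψ j))| + |φs m (u' (ψ j)) - φ (u' (ψ k))| :=
            abs_sub_le _ _ _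
        _ ≤ |φ (u' (ψ j)) - φs m (u' (ψ j))| + (|φs m (u' (ψ j)) - φs m (u' (ψ k))|
              + |φs m (u' (ψ k)) - φ (u' (ψ k))|) := by
            gcongr
        _ = _ := by ring
    have t3 : |φs m (u' (ψ k)) - φ (u' (ψ k))| ≤ ε / 4 := by
      rw [abs_sub_comm]; exact t2
    linarith
  have hlim : ∀ φ : StrongDual ℝ Y, ∃ l, Tendsto (fun k => φ (u' (ψ k))) atTop (nhds l) :=
    fun φ => cauchySeq_tendsto_of_complete (hcauchy φ)
  choose L hL using hlim
  -- package the limit as an element of the double dual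
  set Λlin : StrongDual ℝ Y →ₗ[ℝ] ℝ :=
    { toFun := L
      map_add' := by
        intro φ₁ φ₂
        refine tendsto_nhds_unique (hL (φ₁ + φ₂)) ?_
        have := (hL φ₁).add (hL φ₂)
        simpa using this
      map_smul' := by
        intro a φ
        refine tendsto_nhds_unique (hL (a • φ)) ?_
        have := (hL φ).const_mul a
        simpa using this } with hΛlin
  have hΛbd : ∀ φ : StrongDual ℝ Y, ‖Λlin φ‖ ≤ C * ‖φ‖ := by
    intro φ
    have h1 : Tendsto (fun k => ‖φ (u' (ψ k))‖) atTop (nhds ‖L φ‖) := (hL φ).norm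
    refine le_of_tendsto h1 (Eventually.of_forall fun k => ?_)
    calc ‖φ (u' (ψ k))‖ ≤ ‖φ‖ * ‖u' (ψ k)‖ := φ.le_opNorm _
      _ ≤ ‖φ‖ * C := mul_le_mul_of_nonneg_left (hu'nrm _) (norm_nonneg φ)
      _ = C * ‖φ‖ := mul_comm _ _
  set Λ : StrongDual ℝ (StrongDual ℝ Y) := LinearMap.mkContinuous Λlin C (fun φ => hΛbd φ) with hΛ
  obtain ⟨y₀, hy₀⟩ := hYrefl Λ
  have hy₀val : ∀ φ : StrongDual ℝ Y, φ y₀ = L φ := by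
    intro φ
    have := congrArg (fun Ψ => Ψ φ) hy₀
    simpa [dual_def, hΛ, hΛlin] using this
  refine ⟨(y₀ : E), ψ, hψ, fun f => ?_⟩
  have hres := hL (auxRestrict Y f)
  have heq : ∀ k, auxRestrict Y f (u' (ψ k)) = f (u (ψ k)) := fun k => rfl
  have heq0 : f (y₀ : E) = L (auxRestrict Y f) := by
    rw [← hy₀val (auxRestrict Y f)]; rfl
  rw [heq0]
  simpa [heq] using hres

/-- Let `G` and `H` be nonempty subsets of a reflexive Banach space (reflexivity: the
canonical inclusion into the double dual is surjective), with `G` weakly closed and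
`H` compact, and let `T` be an almost cyclic contraction on `G ∪ H` that is weakly
sequentially continuous on `G`. Then there is `u ∈ G` with `‖u − Tu‖ = σ(Tu,G)`. -/
theorem bestApprox_weaklyContinuous {E : Type*} [NormedAddCommGroup E]
    [NormedSpace ℝ E] [CompleteSpace E]
    (href : Function.Surjective (NormedSpace.inclusionInDoubleDual ℝ E))
    (G H : Set E) (hG : G.Nonempty) (hH : H.Nonempty)
    (hGwc : IsClosed ((toWeakSpace ℝ E) '' G)) (hHc : IsCompact H)
    (T : E → E) (hT : AlmostCyclicContraction G H T)
    (hTw : ∀ (x : ℕ → E) (x₀ : E), (∀ n, x n ∈ G) → x₀ ∈ G →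
      (∀ f : E →L[ℝ] ℝ, Tendsto (fun n => f (x n)) atTop (nhds (f x₀))) →
      (∀ f : E →L[ℝ] ℝ, Tendsto (fun n => f (T (x n))) atTop (nhds (f (T x₀))))) :
    ∃ u ∈ G, ‖u - T u‖ = Metric.infDist (T u) G := by
  classical
  obtain ⟨hTGH, hTHG, β, hβ0, hβ1, hcon⟩ := hT
  -- the iterated sequence
  set u : ℕ → E := fun n => (fun x => T (T x))^[n] hG.some with hudef
  have hustep : ∀ n, u (n + 1) = T (T (u n)) := by
    intro n
    simp only [hudef, Function.iterate_succ_apply']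
  have hu : ∀ n, u n ∈ G := by
    intro n
    induction n with
    | zero => exact hG.some_mem
    | succ n ih => rw [hustep n]; exact hTHG (hTGH ih)
  set v : ℕ → E := fun n => T (u n) with hvdef
  have hv : ∀ n, v n ∈ H := fun n => hTGH (hu n)
  have huv : ∀ n, u (n + 1) = T (v n) := fun n => hustep n
  set b : ℕ → ℝ := fun n => dist (u n) (v n) with hbdef
  set σ : ℕ → ℝ := fun n => infDist (v n) G with hσdef
  have hb0 : ∀ n, 0 ≤ b n := fun n => dist_nonneg
  have hσ0 : ∀ n, 0 ≤ σ n := fun n => infDist_nonneg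
  have hσb : ∀ n, σ n ≤ b n := by
    intro n
    have := infDist_le_dist_of_mem (x := v n) (hu n)
    rwa [dist_comm] at this
  -- key contraction estimates
  have key1 : ∀ n, dist (u (n + 1)) (v n) ≤ β * b n + (1 - β) * σ n := by
    intro n
    have h := hcon (u n) (hu n) (v n) (hv n)
    have e : dist (u (n + 1)) (v n) = dist (T (u n)) (T (v n)) := by
      rw [huv n]
      exact dist_comm _ _
    rw [e]
    exact h
  have key2 : ∀ n, b (n + 1) ≤ β * dist (u (n + 1)) (v n) + (1 - β) * σ n := by
    intro n
    have h := hcon (u (n + 1)) (hu (n + 1)) (v n) (hv n)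
    have e : dist (u (n + 1)) (v (n + 1)) = dist (T (u (n + 1))) (T (v n)) := by
      have e1 : v (n + 1) = T (u (n + 1)) := rfl
      rw [e1, dist_comm, huv n]
    show dist (u (n + 1)) (v (n + 1)) ≤ _
    rw [e]
    exact h
  set c : ℝ := β ^ 2 with hcdef
  have hc0 : 0 ≤ c := sq_nonneg β
  have hc1 : c < 1 := by nlinarith
  have hb2 : ∀ n, b (n + 1) ≤ c * b n + (1 - c) * σ n := by
    intro n
    have h1 := key1 n
    have h2 := key2 n
    have h3 := mul_le_mul_of_nonneg_left h1 hβ0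
    rw [hcdef]
    nlinarith [h3]
  -- σ is antitone
  have hσmono : ∀ n, σ (n + 1) ≤ σ n := by
    intro n
    refine le_of_forall_pos_le_add ?_
    intro ε hε
    have hlt : infDist (v n) G < σ n + ε := by
      simp only [hσdef]; linarith
    obtain ⟨z, hzG, hzd⟩ := (infDist_lt_iff hG).1 hlt
    have hzd' : dist z (v n) ≤ σ n + ε := by rw [dist_comm]; exact hzd.le
    -- step i
    have hstep1 : dist (T z) (u (n + 1)) ≤ σ n + ε := by
      have h := hcon z hzG (v n) (hv n)
      have : dist (T z) (T (v n)) ≤ β * (σ n + ε) + (1 - β) * σ n := by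
        refine le_trans h ?_
        have := mul_le_mul_of_nonneg_left hzd' hβ0
        linarith
      rw [← huv n] at this
      nlinarith
    -- step ii
    have hTzH : T z ∈ H := hTGH hzG
    have hstep2 : dist (v (n + 1)) (T (T z)) ≤ σ n + ε := by
      have h := hcon (u (n + 1)) (hu (n + 1)) (T z) hTzH
      have hinf : infDist (T z) G ≤ σ n + ε := by
        have h5 := infDist_le_dist_of_mem (x := T z) (hu (n + 1))
        exact le_trans h5 hstep1
      have hd : dist (u (n + 1)) (T z) ≤ σ n + ε := by
        rw [dist_comm]; exact hstep1
      have e : dist (v (n + 1)) (T (T z)) = dist (T (u (n + 1))) (T (T z)) := rfl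
      rw [e]
      nlinarith [mul_le_mul_of_nonneg_left hd hβ0]
    have hTTzG : T (T z) ∈ G := hTHG hTzH
    have := infDist_le_dist_of_mem (x := v (n + 1)) hTTzG
    exact le_trans this hstep2
  have hσant : Antitone σ := antitone_nat_of_succ_le hσmono
  -- b is antitone, hence bounded
  have hbmono : ∀ n, b (n + 1) ≤ b n := by
    intro n
    have := hb2 n
    nlinarith [hσb n]
  have hbant : Antitone b := antitone_nat_of_succ_le hbmono
  have hbb : ∀ n, b n ≤ b 0 := fun n => hbant (Nat.zero_le n)
  -- the limit σstar
  have hbdd : BddBelow (Set.range σ) := ⟨0, by rintro x ⟨n, rfl⟩; exact hσ0 n⟩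
  set σstar : ℝ := ⨅ n, σ n with hσstar
  have hσtend : Tendsto σ atTop (nhds σstar) := tendsto_atTop_ciInf hσant hbdd
  have hσstar_le : ∀ n, σstar ≤ σ n := fun n => ciInf_le hbdd n
  have hσstar0 : 0 ≤ σstar := le_ciInf hσ0
  -- b tends to σstar
  have hbtend : Tendsto b atTop (nhds σstar) := by
    rw [Metric.tendsto_atTop]
    intro ε hε
    obtain ⟨N, hN⟩ : ∃ N, σ N < σstar + ε / 2 := by
      apply exists_lt_of_ciInf_lt
      rw [← hσstar]; linarith
    have claim : ∀ m, b (N + m) ≤ c ^ m * b N + (σstar + ε / 2) := by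
      intro m
      induction m with
      | zero => simp; nlinarith
      | succ m ih =>
        have h1 := hb2 (N + m)
        have h2 : σ (N + m) ≤ σstar + ε / 2 := le_trans (hσant (Nat.le_add_right N m)) hN.le
        have h3 : c * b (N + m) ≤ c * (c ^ m * b N + (σstar + ε / 2)) :=
          mul_le_mul_of_nonneg_left ih hc0
        have e : N + (m + 1) = (N + m) + 1 := rfl
        rw [e]
        calc b ((N + m) + 1) ≤ c * b (N + m) + (1 - c) * σ (N + m) := h1
          _ ≤ c * (c ^ m * b N + (σstar + ε / 2)) + (1 - c) * (σstar + ε / 2) := by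
              nlinarith
          _ = c ^ (m + 1) * b N + (σstar + ε / 2) := by ring
    obtain ⟨M, hM⟩ : ∃ M, c ^ M * b N < ε / 2 := by
      have h := (tendsto_pow_atTop_nhds_zero_of_lt_one hc0 hc1).mul_const (b N)
      rw [zero_mul, Metric.tendsto_atTop] at h
      obtain ⟨M, hM⟩ := h (ε / 2) (by linarith)
      refine ⟨M, ?_⟩
      have := hM M le_rfl
      rw [Real.dist_eq, sub_zero] at this
      exact lt_of_le_of_lt (le_abs_self _) this
    refine ⟨N + M, fun n hn => ?_⟩
    have hNn : N ≤ n := le_trans (Nat.le_add_right N M) hn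
    have e : n = N + (n - N) := (Nat.add_sub_cancel' hNn).symm
    have hmM : M ≤ n - N := by omega
    have hcle : c ^ (n - N) ≤ c ^ M := pow_le_pow_of_le_one hc0 hc1.le hmM
    have hbn : b n ≤ c ^ M * b N + (σstar + ε / 2) := by
      rw [e]
      refine le_trans (claim (n - N)) ?_
      have : c ^ (n - N) * b N ≤ c ^ M * b N := mul_le_mul_of_nonneg_right hcle (hb0 N)
      linarith
    have hlow : σstar ≤ b n := le_trans (hσstar_le n) (hσb n)
    rw [Real.dist_eq, abs_lt]
    constructor <;> linarith
  -- compactness of H: extract convergent subsequence of v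
  obtain ⟨p, hpH, φ₁, hφ₁, hvconv⟩ := hHc.tendsto_subseq hv
  -- boundedness of u
  obtain ⟨R, hR⟩ := hHc.isBounded.exists_norm_le
  have hCu : ∀ n, ‖u n‖ ≤ R + b 0 := by
    intro n
    have h1 : ‖u n‖ ≤ ‖u n - v n‖ + ‖v n‖ := by
      simpa using norm_add_le (u n - v n) (v n)
    have h2 : ‖u n - v n‖ = b n := (dist_eq_norm _ _).symm
    have h3 : ‖v n‖ ≤ R := hR _ (hv n)
    have := hbb n
    linarith
  -- weak subsequence extraction
  obtain ⟨u₀, ψ, hψ, hweak⟩ := aux_weak_seq_compact href (u ∘ φ₁) (R + b 0)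
    (fun n => hCu _)
  set φ : ℕ → ℕ := φ₁ ∘ ψ with hφdef
  have hφ : StrictMono φ := hφ₁.comp hψ
  have hweak' : ∀ f : StrongDual ℝ E, Tendsto (fun k => f (u (φ k))) atTop (nhds (f u₀)) :=
    fun f => hweak f
  have hvφ : Tendsto (fun k => v (φ k)) atTop (nhds p) :=
    hvconv.comp hψ.tendsto_atTop
  -- u₀ ∈ G
  have hBinj : Function.Injective ((topDualPairing ℝ E).flip) := by
    intro x y h
    refine (eq_iff_forall_dual_eq ℝ).2 fun g => ?_
    exact LinearMap.congr_fun h g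
  have hu₀G : u₀ ∈ G := by
    have htend : Tendsto (fun k => toWeakSpace ℝ E (u (φ k))) atTop
        (nhds (toWeakSpace ℝ E u₀)) := by
      refine (WeakBilin.tendsto_iff_forall_eval_tendsto (B := (topDualPairing ℝ E).flip)
        (f := fun k => toWeakSpace ℝ E (u (φ k))) (x := toWeakSpace ℝ E u₀) hBinj).2 ?_
      intro f
      exact hweak' f
    have hmem : ∀ k, toWeakSpace ℝ E (u (φ k)) ∈ (toWeakSpace ℝ E) '' G :=
      fun k => ⟨u (φ k), hu _, rfl⟩
    have := hGwc.mem_of_tendsto htend (Eventually.of_forall hmem)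
    obtain ⟨g, hgG, hge⟩ := this
    rwa [← (toWeakSpace ℝ E).injective hge]
  -- identify p = T u₀
  have hTconv := hTw (fun k => u (φ k)) u₀ (fun k => hu _) hu₀G hweak'
  have hpTu₀ : p = T u₀ := by
    refine (eq_iff_forall_dual_eq ℝ).2 fun g => ?_
    have h1 : Tendsto (fun k => g (v (φ k))) atTop (nhds (g p)) :=
      (g.continuous.tendsto p).comp hvφ
    have h2 : Tendsto (fun k => g (T (u (φ k)))) atTop (nhds (g (T u₀))) := hTconv g
    exact tendsto_nhds_unique h1 h2
  -- infDist p G = σstar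
  have hσφ : Tendsto (fun k => σ (φ k)) atTop (nhds σstar) :=
    hσtend.comp hφ.tendsto_atTop
  have hσp : Tendsto (fun k => σ (φ k)) atTop (nhds (infDist p G)) := by
    have : Tendsto (fun k => infDist (v (φ k)) G) atTop (nhds (infDist p G)) :=
      ((continuous_infDist_pt G).tendsto p).comp hvφ
    exact this
  have hpσ : infDist p G = σstar := tendsto_nhds_unique hσp hσφ
  have hbφ : Tendsto (fun k => b (φ k)) atTop (nhds σstar) :=
    hbtend.comp hφ.tendsto_atTop
  -- ‖u₀ - p‖ ≤ σstar
  have hle1 : ‖u₀ - p‖ ≤ σstar := by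
    rcases eq_or_ne u₀ p with h | h
    · rw [h]; simpa using hσstar0
    · obtain ⟨g, hg1, hg2⟩ := exists_dual_vector ℝ (u₀ - p) (norm_ne_zero_iff.2 (sub_ne_zero.2 h))
      have h1 : Tendsto (fun k => g (u (φ k)) - g p) atTop (nhds (g u₀ - g p)) :=
        (hweak' g).sub tendsto_const_nhds
      have hd0 : Tendsto (fun k => dist (v (φ k)) p) atTop (nhds 0) :=
        tendsto_iff_dist_tendsto_zero.1 hvφ
      have h2 : Tendsto (fun k => b (φ k) + dist (v (φ k)) p) atTop
          (nhds (σstar + 0)) := hbφ.add hd0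
      have hbnd : ∀ k, g (u (φ k)) - g p ≤ b (φ k) + dist (v (φ k)) p := by
        intro k
        have e1 : g (u (φ k)) - g p = g (u (φ k) - p) := by rw [map_sub]
        have e2 : g (u (φ k) - p) ≤ ‖u (φ k) - p‖ := by
          calc g (u (φ k) - p) ≤ ‖g (u (φ k) - p)‖ := le_abs_self _
            _ ≤ ‖g‖ * ‖u (φ k) - p‖ := g.le_opNorm _
            _ = ‖u (φ k) - p‖ := by rw [hg1, one_mul]
        have e3 : ‖u (φ k) - p‖ ≤ dist (u (φ k)) (v (φ k)) + dist (v (φ k)) p := by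
          rw [← dist_eq_norm]
          exact dist_triangle _ _ _
        rw [e1]
        exact le_trans e2 e3
      have := le_of_tendsto_of_tendsto' h1 h2 hbnd
      rw [add_zero] at this
      have e4 : g (u₀ - p) = ‖u₀ - p‖ := by exact_mod_cast hg2
      rw [← map_sub, e4] at this
      linarith
  have hge1 : σstar ≤ ‖u₀ - p‖ := by
    have := infDist_le_dist_of_mem (x := p) hu₀G
    rw [dist_comm, dist_eq_norm] at this
    rw [← hpσ]
    exact this
  refine ⟨u₀, hu₀G, ?_⟩
  rw [← hpTu₀, hpσ]
  linarith
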